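/- Let an admissible chain-partition datum for e_1,…,e_M be given with β̂ ≠ 0, and set β = β̂/‖β̂‖². Let t = |J|, let φ : J → {1,…,t} be the unique bijection taking the Hebrew lexicographic order on J to the standard order on {1,…,t}, and define δ : {1,…,t} → {1,…,t} by letting δ(φ(h,m)) be the number of elements (h',m') ∈ J with m' < m + 1, or m' = m + 1 and h' < h. Then for k_1, k_2 ∈ {1,…,t}, i ∈ Δ_{φ^{−1}(k_1)} and j ∈ Δ_{φ^{−1}(k_2)}, one has ⟪β, e_i − e_j⟫ ≥ ‖β‖² if and only if k_2 > δ(k_1). -/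

import Mathlib

open scoped RealInnerProductSpace BigOperators

/-- A chain-partition datum for the pairwise orthogonal nonzero vectors `e 0, …, e (M-1)`:
a positive integer `L`, functions `l1 l2 : {1,…,L} → ℤ` with `l1 h ≤ l2 h`, and pairwise
disjoint nonempty subsets `Δ h m ⊆ {1,…,M}` for `(h,m)` in the index set
`J = {(h,m) : 1 ≤ h ≤ L, l1 h ≤ m ≤ l2 h}` whose union is `{1,…,M}`. -/
structure ChainPartitionDatum (M : ℕ) (V : Type*) [NormedAddCommGroup V]
    [InnerProductSpace ℝ V] (e : Fin M → V) where
  L : ℕ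
  Lpos : 0 < L
  l1 : Fin L → ℤ
  l2 : Fin L → ℤ
  l1_le_l2 : ∀ h, l1 h ≤ l2 h
  Δ : Fin L → ℤ → Finset (Fin M)
  Δ_nonempty : ∀ h m, l1 h ≤ m → m ≤ l2 h → (Δ h m).Nonempty
  Δ_disjoint : ∀ h m h' m', l1 h ≤ m → m ≤ l2 h → l1 h' ≤ m' → m' ≤ l2 h' →
    (h, m) ≠ (h', m') → Disjoint (Δ h m) (Δ h' m')
  Δ_union : ∀ i : Fin M, ∃ h m, l1 h ≤ m ∧ m ≤ l2 h ∧ i ∈ Δ h m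

namespace ChainPartitionDatum

variable {V : Type*} [NormedAddCommGroup V] [InnerProductSpace ℝ V]
variable {M : ℕ} {e : Fin M → V}

/-- `r h m = Σ_{j ∈ Δ_{h,m}} ‖e_j‖⁻²`. -/
noncomputable def r (D : ChainPartitionDatum M V e) (h : Fin D.L) (m : ℤ) : ℝ :=
  ∑ j ∈ D.Δ h m, (‖e j‖ ^ 2)⁻¹

/-- `ε h = (Σ_{m=l1 h}^{l2 h} m·r_{h,m}) / (Σ_{m=l1 h}^{l2 h} r_{h,m})`. -/
noncomputable def eps (D : ChainPartitionDatum M V e) (h : Fin D.L) : ℝ :=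
  (∑ m ∈ Finset.Icc (D.l1 h) (D.l2 h), (m : ℝ) * D.r h m) /
    ∑ m ∈ Finset.Icc (D.l1 h) (D.l2 h), D.r h m

/-- Admissibility: `−1/2 ≤ ε(h) < 1/2` for all `h` and `ε(1) > ε(2) > … > ε(L)`. -/
def Admissible (D : ChainPartitionDatum M V e) : Prop :=
  (∀ h, -(1 / 2 : ℝ) ≤ D.eps h ∧ D.eps h < 1 / 2) ∧ StrictAnti D.eps

/-- `β̂ = Σ_{h=1}^{L} Σ_{m=l1 h}^{l2 h} Σ_{j ∈ Δ_{h,m}} (ε(h) − m)·e_j/‖e_j‖²`. -/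
noncomputable def betaHat (D : ChainPartitionDatum M V e) : V :=
  ∑ h : Fin D.L, ∑ m ∈ Finset.Icc (D.l1 h) (D.l2 h), ∑ j ∈ D.Δ h m,
    ((D.eps h - (m : ℝ)) / ‖e j‖ ^ 2) • e j

end ChainPartitionDatum


open Finset in
lemma ChainPartitionDatum.inner_betaHat_aux
    {V : Type*} [NormedAddCommGroup V] [InnerProductSpace ℝ V]
    {M : ℕ} {e : Fin M → V} (he : ∀ i, e i ≠ 0)
    (horth : ∀ i j : Fin M, i ≠ j → ⟪e i, e j⟫ = 0)
    (D : ChainPartitionDatum M V e) (h : Fin D.L) (m : ℤ)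
    (hm1 : D.l1 h ≤ m) (hm2 : m ≤ D.l2 h) (i : Fin M) (hi : i ∈ D.Δ h m) :
    ⟪D.betaHat, e i⟫ = D.eps h - m := by
  unfold ChainPartitionDatum.betaHat
  rw [sum_inner, Finset.sum_eq_single_of_mem h (mem_univ h)]
  · rw [sum_inner, Finset.sum_eq_single_of_mem m (Finset.mem_Icc.2 ⟨hm1, hm2⟩)]
    · rw [sum_inner, Finset.sum_eq_single_of_mem i hi]
      · rw [real_inner_smul_left, real_inner_self_eq_norm_sq,
          div_mul_cancel₀ _ (pow_ne_zero 2 (norm_ne_zero_iff.2 (he i)))]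
      · intro j hj hji
        rw [real_inner_smul_left, horth j i hji, mul_zero]
    · intro m' hm' hmne
      rw [sum_inner]
      apply Finset.sum_eq_zero
      intro j hj
      rw [real_inner_smul_left]
      rcases eq_or_ne j i with rfl | hji
      · exact absurd hi (Finset.disjoint_left.1
          (D.Δ_disjoint h m' h m (Finset.mem_Icc.1 hm').1 (Finset.mem_Icc.1 hm').2 hm1 hm2
            (by simp [hmne])) hj)
      · rw [horth j i hji, mul_zero]
  · intro h' _ hhne
    rw [sum_inner]
    apply Finset.sum_eq_zero
    intro m' hm'
    rw [sum_inner]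
    apply Finset.sum_eq_zero
    intro j hj
    rw [real_inner_smul_left]
    rcases eq_or_ne j i with rfl | hji
    · exact absurd hi (Finset.disjoint_left.1
        (D.Δ_disjoint h' m' h m (Finset.mem_Icc.1 hm').1 (Finset.mem_Icc.1 hm').2 hm1 hm2
          (by simp [hhne])) hj)
    · rw [horth j i hji, mul_zero]

/-- For an admissible chain-partition datum with `β̂ ≠ 0`, `β = β̂/‖β̂‖²`,
`φ : J → {1,…,t}` the unique bijection taking the Hebrew lexicographic order on `J` to the
standard order, and `δ` defined by letting `δ(φ(h,m))` be the number of `(h',m') ∈ J` with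
`m' < m+1`, or `m' = m+1` and `h' < h`: for `p, q ∈ J`, `i ∈ Δ_p` and `j ∈ Δ_q`, one has
`⟪β, e_i − e_j⟫ ≥ ‖β‖²` if and only if `φ(q) > δ(φ(p))`. -/
theorem inner_sub_ge_iff_delta_lt
    {V : Type*} [NormedAddCommGroup V] [InnerProductSpace ℝ V]
    {M : ℕ} (hM : 0 < M) (e : Fin M → V) (he : ∀ i, e i ≠ 0)
    (horth : ∀ i j : Fin M, i ≠ j → ⟪e i, e j⟫ = 0)
    (D : ChainPartitionDatum M V e) (hD : D.Admissible)
    (hne : D.betaHat ≠ 0) (β : V) (hβ : β = (‖D.betaHat‖ ^ 2)⁻¹ • D.betaHat)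
    (JF : Finset (Fin D.L × ℤ))
    (hJF : JF = Finset.univ.biUnion fun h : Fin D.L =>
      (Finset.Icc (D.l1 h) (D.l2 h)).image fun m => (h, m))
    (t : ℕ) (ht : t = JF.card)
    (φ : {p // p ∈ JF} → {k // k ∈ Finset.Icc 1 t})
    (hbij : Function.Bijective φ)
    (hord : ∀ p q : {p // p ∈ JF},
      ((φ p).1 ≤ (φ q).1 ↔ (p.1.2 < q.1.2 ∨ (p.1.2 = q.1.2 ∧ p.1.1 ≤ q.1.1))))
    (δ : ℕ → ℕ)
    (hδ : ∀ p : {p // p ∈ JF}, δ (φ p).1 =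
      (JF.filter fun q => q.2 < p.1.2 + 1 ∨ (q.2 = p.1.2 + 1 ∧ q.1 < p.1.1)).card)
    (p q : Fin D.L × ℤ) (hp : p ∈ JF) (hq : q ∈ JF)
    (i : Fin M) (hi : i ∈ D.Δ p.1 p.2) (j : Fin M) (hj : j ∈ D.Δ q.1 q.2) :
    ⟪β, e i - e j⟫ ≥ ‖β‖ ^ 2 ↔ δ (φ ⟨p, hp⟩).1 < (φ ⟨q, hq⟩).1 := by
  classical
  -- bounds for p and q
  have bounds : ∀ x : Fin D.L × ℤ, x ∈ JF → D.l1 x.1 ≤ x.2 ∧ x.2 ≤ D.l2 x.1 := by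
    intro x hx
    rw [hJF] at hx
    simp only [Finset.mem_biUnion, Finset.mem_image, Finset.mem_univ, true_and,
      Finset.mem_Icc] at hx
    obtain ⟨h, m, ⟨h1, h2⟩, heq⟩ := hx
    rw [← heq]
    exact ⟨h1, h2⟩
  obtain ⟨hp1, hp2⟩ := bounds p hp
  obtain ⟨hq1, hq2⟩ := bounds q hq
  have hip : ⟪D.betaHat, e i⟫ = D.eps p.1 - p.2 :=
    D.inner_betaHat_aux he horth p.1 p.2 hp1 hp2 i hi
  have hjq : ⟪D.betaHat, e j⟫ = D.eps q.1 - q.2 :=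
    D.inner_betaHat_aux he horth q.1 q.2 hq1 hq2 j hj
  have hbn : (0:ℝ) < ‖D.betaHat‖ ^ 2 := pow_pos (norm_pos_iff.2 hne) 2
  -- the analytic condition
  set X : ℝ := (D.eps p.1 - p.2) - (D.eps q.1 - q.2) with hX
  have lhs_eq : ⟪β, e i - e j⟫ = (‖D.betaHat‖ ^ 2)⁻¹ * X := by
    rw [hβ, real_inner_smul_left, inner_sub_right, hip, hjq]
  have hbsq : ‖β‖ ^ 2 = (‖D.betaHat‖ ^ 2)⁻¹ := by
    rw [hβ, norm_smul, Real.norm_eq_abs, abs_of_nonneg (by positivity), mul_pow, ← inv_pow]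
    field_simp
  have step1 : (⟪β, e i - e j⟫ ≥ ‖β‖ ^ 2) ↔ 1 ≤ X := by
    rw [ge_iff_le, lhs_eq, hbsq]
    nth_rewrite 1 [← mul_one ((‖D.betaHat‖ ^ 2)⁻¹)]
    exact mul_le_mul_iff_right₀ (by positivity)
  -- the condition
  have hεp := (hD.1 p.1)
  have hεq := (hD.1 q.1)
  have step2 : (1 ≤ X) ↔ (p.2 + 1 < q.2 ∨ (q.2 = p.2 + 1 ∧ p.1 ≤ q.1)) := by
    rcases lt_trichotomy q.2 (p.2 + 1) with hlt | heq | hgt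
    · apply iff_of_false
      · have : (q.2 : ℝ) ≤ (p.2 : ℝ) := by exact_mod_cast (by omega : q.2 ≤ p.2)
        intro hx
        rw [hX] at hx
        linarith [hεp.2, hεq.1]
      · rintro (h1 | ⟨h1, -⟩) <;> omega
    · have hc : (q.2 : ℝ) = (p.2 : ℝ) + 1 := by exact_mod_cast heq
      constructor
      · intro hx
        right
        refine ⟨heq, (hD.2.le_iff_ge).1 ?_⟩
        rw [hX] at hx
        linarith
      · rintro (h1 | ⟨-, h1⟩)
        · omega
        · have := (hD.2.le_iff_ge).2 h1
          rw [hX]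
          linarith
    · apply iff_of_true
      · have : (p.2 : ℝ) + 2 ≤ (q.2 : ℝ) := by exact_mod_cast (by omega : p.2 + 2 ≤ q.2)
        rw [hX]
        linarith [hεp.1, hεq.2]
      · exact Or.inl hgt
  -- the combinatorial condition
  set c := ((φ ⟨q, hq⟩).1 : ℕ) with hc
  have hφq := (φ ⟨q, hq⟩).2
  rw [Finset.mem_Icc] at hφq
  -- c equals the number of elements ≼ q
  have hc_card : c = (Finset.univ.filter fun x : {x // x ∈ JF} =>
      (x.1.2 < q.2 ∨ (x.1.2 = q.2 ∧ x.1.1 ≤ q.1))).card := by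
    have e1 : (Finset.univ.filter fun x : {x // x ∈ JF} =>
        (x.1.2 < q.2 ∨ (x.1.2 = q.2 ∧ x.1.1 ≤ q.1)))
        = (Finset.univ.filter fun x : {x // x ∈ JF} => (φ x).1 ≤ c) := by
      apply Finset.filter_congr
      intro x _
      exact (hord x ⟨q, hq⟩).symm
    rw [e1]
    have e2 : (Finset.univ.filter fun x : {x // x ∈ JF} => (φ x).1 ≤ c).card
        = (Finset.Icc 1 c).card := by
      apply Finset.card_bij (fun x _ => ((φ x).1 : ℕ))
      · intro a ha
        simp only [Finset.mem_filter] at ha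
        have h1 := (φ a).2
        rw [Finset.mem_Icc] at h1 ⊢
        exact ⟨h1.1, ha.2⟩
      · intro a _ b _ hab
        exact hbij.injective (Subtype.ext hab)
      · intro k hk
        rw [Finset.mem_Icc] at hk
        obtain ⟨a, ha⟩ := hbij.surjective ⟨k, Finset.mem_Icc.2 ⟨hk.1, le_trans hk.2 hφq.2⟩⟩
        refine ⟨a, ?_, by rw [ha]⟩
        simp only [Finset.mem_filter, Finset.mem_univ, true_and, ha]
        exact hk.2
    rw [e2, Nat.card_Icc]
    omega
  -- δ equals the subtype count
  have hδ_card : δ (φ ⟨p, hp⟩).1 = (Finset.univ.filter fun x : {x // x ∈ JF} =>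
      (x.1.2 < p.2 + 1 ∨ (x.1.2 = p.2 + 1 ∧ x.1.1 < p.1))).card := by
    rw [hδ ⟨p, hp⟩]
    apply Finset.card_bij (fun (x : Fin D.L × ℤ)
      (hx : x ∈ JF.filter fun q => q.2 < p.2 + 1 ∨ (q.2 = p.2 + 1 ∧ q.1 < p.1)) =>
      (⟨x, (Finset.mem_filter.1 hx).1⟩ : {x // x ∈ JF}))
    · intro a ha
      simp only [Finset.mem_filter, Finset.mem_univ, true_and]
      exact (Finset.mem_filter.1 ha).2
    · intro a _ b _ hab
      exact congrArg Subtype.val hab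
    · intro b hb
      simp only [Finset.mem_filter, Finset.mem_univ, true_and] at hb
      exact ⟨b.1, Finset.mem_filter.2 ⟨b.2, hb⟩, rfl⟩
  set A := (Finset.univ.filter fun x : {x // x ∈ JF} =>
      (x.1.2 < q.2 ∨ (x.1.2 = q.2 ∧ x.1.1 ≤ q.1)))
  set B := (Finset.univ.filter fun x : {x // x ∈ JF} =>
      (x.1.2 < p.2 + 1 ∨ (x.1.2 = p.2 + 1 ∧ x.1.1 < p.1)))
  have step3 : (δ (φ ⟨p, hp⟩).1 < c) ↔ (p.2 + 1 < q.2 ∨ (q.2 = p.2 + 1 ∧ p.1 ≤ q.1)) := by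
    rw [hδ_card, hc_card]
    constructor
    · intro hlt
      by_contra hcond
      push_neg at hcond
      obtain ⟨hcond1, hcond2⟩ := hcond
      -- so q.2 ≤ p.2 + 1, and in the equality case q.1 < p.1; i.e. q ∈ B
      have hqB : q.2 < p.2 + 1 ∨ (q.2 = p.2 + 1 ∧ q.1 < p.1) := by
        rcases lt_trichotomy q.2 (p.2 + 1) with h1 | h1 | h1
        · exact Or.inl h1
        · exact Or.inr ⟨h1, hcond2 h1⟩
        · omega
      -- then A ⊆ B, contradiction
      have hAB : A ⊆ B := by
        intro x hx
        simp only [A, B, Finset.mem_filter, Finset.mem_univ, true_and] at hx ⊢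
        rcases hqB with h1 | ⟨h1, h2⟩
        · rcases hx with h3 | ⟨h3, -⟩
          · exact Or.inl (by omega)
          · exact Or.inl (by omega)
        · rcases hx with h3 | ⟨h3, h4⟩
          · exact Or.inl (by omega)
          · exact Or.inr ⟨by omega, lt_of_le_of_lt h4 h2⟩
      exact absurd (Finset.card_le_card hAB) (by omega)
    · intro hcond
      have hBA : B ⊂ A := by
        constructor
        · intro x hx
          simp only [A, B, Finset.mem_filter, Finset.mem_univ, true_and] at hx ⊢
          rcases hcond with h1 | ⟨h1, h2⟩
          · rcases hx with h3 | ⟨h3, -⟩ <;> exact Or.inl (by omega)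
          · rcases hx with h3 | ⟨h3, h4⟩
            · exact Or.inl (by omega)
            · exact Or.inr ⟨by omega, le_of_lt (lt_of_lt_of_le h4 h2)⟩
        · intro hsub
          have hqA : (⟨q, hq⟩ : {x // x ∈ JF}) ∈ A := by
            exact Finset.mem_filter.2 ⟨Finset.mem_univ _, Or.inr ⟨rfl, le_refl _⟩⟩
          have hqB := hsub hqA
          simp only [B, Finset.mem_filter, Finset.mem_univ, true_and] at hqB
          rcases hcond with h1 | ⟨h1, h2⟩
          · rcases hqB with h3 | ⟨h3, -⟩ <;> omega
          · rcases hqB with h3 | ⟨h3, h4⟩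
            · omega
            · exact absurd (lt_of_le_of_lt h2 h4) (lt_irrefl _)
      exact Finset.card_lt_card hBA
  rw [step1, step2, step3]
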